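/- For every partizan game G and Left dead-end X, if Left moving first loses G + X under misère play, then Left moving first also loses G + τ_n(X) for every n ≥ fb(G), where τ_n is the n-th truncation and fb(G) is the formal birthday of G. -/

import Mathlib

/-- A (finite) partizan game: finite lists of Left and Right options. -/
inductive Gm : Type where
  | node : List Gm → List Gm → Gm

/-- The Left options of a game. -/
def Gm.leftOpts : Gm → List Gm
  | .node l _ => l

/-- The Right options of a game. -/
def Gm.rightOpts : Gm → List Gm
  | .node _ r => r

/-- Disjunctive sum of games. -/
def Gm.add : Gm → Gm → Gm
  | .node gl gr, .node hl hr =>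
      .node
        (gl.attach.map (fun g => Gm.add g.1 (.node hl hr)) ++
         hl.attach.map (fun h => Gm.add (.node gl gr) h.1))
        (gr.attach.map (fun g => Gm.add g.1 (.node hl hr)) ++
         hr.attach.map (fun h => Gm.add (.node gl gr) h.1))
termination_by g h => sizeOf g + sizeOf h
decreasing_by
  all_goals first
  | (have := List.sizeOf_lt_of_mem g.2; simp; omega)
  | (have := List.sizeOf_lt_of_mem h.2; simp; omega)

mutual
/-- Left, moving first, wins `G` under misère play (a player unable to move wins):
`G` is a Left end, or some Left option is a loss for Right moving first. -/
def Gm.lwins : Gm → Prop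
  | .node l _ => l = [] ∨ ∃ g ∈ l.attach, ¬ Gm.rwins g.1
termination_by G => sizeOf G
decreasing_by have := List.sizeOf_lt_of_mem g.2; simp; omega

/-- Right, moving first, wins `G` under misère play. -/
def Gm.rwins : Gm → Prop
  | .node _ r => r = [] ∨ ∃ g ∈ r.attach, ¬ Gm.lwins g.1
termination_by G => sizeOf G
decreasing_by have := List.sizeOf_lt_of_mem g.2; simp; omega
end

/-- The game `0`. -/
def Gm.zero : Gm := .node [] []

/-- The game `* = {0|0}`. -/
def Gm.star : Gm := .node [Gm.zero] [Gm.zero]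

/-- `G` is a Left dead-end: `G` has no Left options, and every subposition
likewise has no Left options. -/
inductive Gm.IsLDE : Gm → Prop
  | mk (r : List Gm) : (∀ g ∈ r, Gm.IsLDE g) → Gm.IsLDE (.node [] r)

/-- The formal birthday (height of the game tree). -/
def Gm.fb : Gm → ℕ
  | .node l r =>
      max (l.attach.foldr (fun g m => max (Gm.fb g.1 + 1) m) 0)
          (r.attach.foldr (fun g m => max (Gm.fb g.1 + 1) m) 0)
termination_by G => sizeOf G
decreasing_by
  all_goals (have := List.sizeOf_lt_of_mem g.2; simp; omega)

/-- The `n`-th truncation: stop play after `n` moves. -/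
def Gm.trunc : ℕ → Gm → Gm
  | 0, _ => Gm.zero
  | n+1, .node l r => .node (l.map (Gm.trunc n)) (r.map (Gm.trunc n))

lemma Gm.lwins_node (l r : List Gm) :
    Gm.lwins (.node l r) ↔ (l = [] ∨ ∃ g ∈ l, ¬ Gm.rwins g) := by
  rw [Gm.lwins]
  simp

lemma Gm.rwins_node (l r : List Gm) :
    Gm.rwins (.node l r) ↔ (r = [] ∨ ∃ g ∈ r, ¬ Gm.lwins g) := by
  rw [Gm.rwins]
  simp

lemma Gm.add_node (gl gr hl hr : List Gm) :
    Gm.add (.node gl gr) (.node hl hr) =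
      .node
        (gl.map (fun g => Gm.add g (.node hl hr)) ++
         hl.map (fun h => Gm.add (.node gl gr) h))
        (gr.map (fun g => Gm.add g (.node hl hr)) ++
         hr.map (fun h => Gm.add (.node gl gr) h)) := by
  rw [Gm.add]
  simp [List.attach_map_val]


lemma foldr_max_bound {α : Type} (f : α → ℕ) (l : List α) (g : α) (hg : g ∈ l) (a : ℕ) :
    f g + 1 ≤ l.foldr (fun x m => max (f x + 1) m) a := by
  induction l with
  | nil => cases hg
  | cons x xs ih =>
    rcases List.mem_cons.1 hg with h | h
    · subst h; exact le_max_left _ _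
    · exact le_max_of_le_right (ih h)

lemma Gm.fb_lt_left {l r : List Gm} {g : Gm} (hg : g ∈ l) :
    Gm.fb g < Gm.fb (.node l r) := by
  rw [Gm.fb]
  exact lt_of_lt_of_le (Nat.lt_succ_self _)
    (le_max_of_le_left
      (foldr_max_bound (fun x => Gm.fb x.1) l.attach ⟨g, hg⟩ (List.mem_attach _ _) 0))

lemma Gm.fb_lt_right {l r : List Gm} {g : Gm} (hg : g ∈ r) :
    Gm.fb g < Gm.fb (.node l r) := by
  rw [Gm.fb]
  exact lt_of_lt_of_le (Nat.lt_succ_self _)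
    (le_max_of_le_right
      (foldr_max_bound (fun x => Gm.fb x.1) r.attach ⟨g, hg⟩ (List.mem_attach _ _) 0))

lemma Gm.sizeOf_node (l r : List Gm) : sizeOf (Gm.node l r) = 1 + sizeOf l + sizeOf r := by simp

lemma Gm.main : ∀ k n (G X : Gm), X.IsLDE → n + sizeOf G ≤ k →
    ((Gm.fb G ≤ n → ¬ Gm.lwins (G.add X) → ¬ Gm.lwins (G.add (Gm.trunc n X))) ∧
     (Gm.fb G < n → Gm.rwins (G.add X) → Gm.rwins (G.add (Gm.trunc n X)))) := by
  intro k
  induction k with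
  | zero =>
    intro n G X hX hk
    exfalso
    cases G with
    | node l r => rw [Gm.sizeOf_node] at hk; omega
  | succ k ih =>
    rintro n G X hX hk
    obtain ⟨xr, hxr⟩ := hX
    cases G with
    | node gl gr =>
    constructor
    · -- part A
      intro hfb hL
      rw [Gm.add_node, Gm.lwins_node] at hL
      push_neg at hL
      simp only [List.map_nil, List.append_nil, ne_eq, List.map_eq_nil_iff] at hL
      obtain ⟨hgl, hall⟩ := hL
      obtain ⟨g0, hg0⟩ := List.exists_mem_of_ne_nil gl hgl
      have hn1 : 1 ≤ n := by have := Gm.fb_lt_left (r := gr) hg0; omega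
      obtain ⟨m, rfl⟩ : ∃ m, n = m + 1 := ⟨n - 1, by omega⟩
      show ¬ Gm.lwins ((Gm.node gl gr).add (Gm.node ([].map (Gm.trunc m)) (xr.map (Gm.trunc m))))
      rw [Gm.add_node, Gm.lwins_node]
      push_neg
      simp only [List.map_nil, List.append_nil, ne_eq, List.map_eq_nil_iff]
      refine ⟨hgl, ?_⟩
      intro g hg
      rw [List.mem_map] at hg
      obtain ⟨L, hLmem, rfl⟩ := hg
      have hsz : sizeOf L < sizeOf (Gm.node gl gr) := by
        have := List.sizeOf_lt_of_mem hLmem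
        rw [Gm.sizeOf_node]; omega
      have hfbL : Gm.fb L < m + 1 := lt_of_lt_of_le (Gm.fb_lt_left hLmem) hfb
      exact (ih (m + 1) L (Gm.node [] xr) ⟨xr, hxr⟩ (by omega)).2 hfbL
        (hall (L.add (Gm.node [] xr)) (List.mem_map_of_mem hLmem))
    · -- part B
      intro hfb hR
      obtain ⟨m, rfl⟩ : ∃ m, n = m + 1 := ⟨n - 1, by omega⟩
      rw [Gm.add_node, Gm.rwins_node] at hR
      show Gm.rwins ((Gm.node gl gr).add (Gm.node ([].map (Gm.trunc m)) (xr.map (Gm.trunc m))))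
      rw [Gm.add_node, Gm.rwins_node]
      rcases hR with hemp | ⟨g, hg, hnl⟩
      · rw [List.append_eq_nil_iff] at hemp
        rw [List.map_eq_nil_iff.1 hemp.1, List.map_eq_nil_iff.1 hemp.2]
        simp
      · rw [List.mem_append] at hg
        right
        rcases hg with hg | hg
        · rw [List.mem_map] at hg
          obtain ⟨R, hRmem, rfl⟩ := hg
          have hsz : sizeOf R < sizeOf (Gm.node gl gr) := by
            have := List.sizeOf_lt_of_mem hRmem
            rw [Gm.sizeOf_node]; omega
          refine ⟨R.add (Gm.trunc (m+1) (Gm.node [] xr)), ?_, ?_⟩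
          · apply List.mem_append_left
            exact List.mem_map_of_mem hRmem
          · exact (ih (m + 1) R (Gm.node [] xr) ⟨xr, hxr⟩ (by omega)).1
              (le_of_lt (lt_of_lt_of_le (Gm.fb_lt_right hRmem) (le_of_lt hfb))) hnl
        · rw [List.mem_map] at hg
          obtain ⟨xR, hxRmem, rfl⟩ := hg
          refine ⟨(Gm.node gl gr).add (Gm.trunc m xR), ?_, ?_⟩
          · apply List.mem_append_right
            rw [List.map_map]
            exact List.mem_map_of_mem hxRmem
          · exact (ih m (Gm.node gl gr) xR (hxr xR hxRmem) (by omega)).1 (by omega) hnl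


/-- if Left moving first loses `G + X` (misère play), `X` a Left
dead-end, then Left moving first loses `G + τ_n(X)` for every `n ≥ fb(G)`. -/
theorem stmt13 (G X : Gm) (hX : X.IsLDE) (n : ℕ) (hn : G.fb ≤ n)
    (h : ¬ Gm.lwins (G.add X)) : ¬ Gm.lwins (G.add (Gm.trunc n X)) :=
  (Gm.main (n + sizeOf G) n G X hX le_rfl).1 hn h
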